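/- arXiv:2201.00257 — 6 statements merged into one kernel-verified Lean document; each statement's English description precedes it below -/
import Mathlib

section
/- Every social path of odd length 2n+1 on [N] passes through at most n+1 colors; that is, if i : {1,…,2n+2} → {1,…,N} satisfies i(1)=i(2n+2) and every edge {i(k),i(k+1)} (as an unordered pair) occurs at at least two indices k ∈ {1,…,2n+1}, then the range of i has cardinality at most n+1. -/
open MeasureTheory ProbabilityTheory Matrix Filter

attribute [local instance] Classical.propDecidable

noncomputable section

/-- A *pattern* is a subset of the unit square `[0,1]²` whose topological
boundary has two-dimensional Lebesgue measure zero. -/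
def IsPattern (S : Set (ℝ × ℝ)) : Prop :=
  S ⊆ Set.Icc (0 : ℝ) 1 ×ˢ Set.Icc (0 : ℝ) 1 ∧ MeasureTheory.volume (frontier S) = 0

/-- Entry `(i, j)` (here `i j : Fin N` are the 0-based versions of the 1-based
matrix indices) of the `N × N` approximating matrix of the pattern `S` is *active*:
the open square `((j-1)/N, j/N) × ((N-i)/N, (N-i+1)/N)` (in 1-based indexing)
has intersection with `S` with nonempty interior. -/
def entryActive (S : Set (ℝ × ℝ)) (N : ℕ) (i j : Fin N) : Prop :=
  (interior (Set.Ioo (((j : ℕ) : ℝ) / N) ((((j : ℕ) : ℝ) + 1) / N) ×ˢ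
      Set.Ioo (((N : ℝ) - ((i : ℕ) : ℝ) - 1) / N) (((N : ℝ) - ((i : ℕ) : ℝ)) / N) ∩ S)).Nonempty

/-- The `N × N` approximating matrix of a pattern `S`, built from the family
`X` of random variables on `Ω`: the `(i,j)` entry is `X i j / √N` if the entry
is active and `0` otherwise. -/
def approxMatrix {Ω : Type*} (S : Set (ℝ × ℝ)) (X : ℕ → ℕ → Ω → ℝ) (N : ℕ) (ω : Ω) :
    Matrix (Fin N) (Fin N) ℝ :=
  Matrix.of fun i j =>
    if entryActive S N i j then X (i : ℕ) (j : ℕ) ω / Real.sqrt N else 0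

/-- A configuration of length `m` is a function `C : Fin m → Bool`, where
`C k = true` means the `k`-th letter is the starred letter `x*` and
`C k = false` means it is `x`.  `configProd C A` is the word `A^C`: the product
of `m` matrices whose `k`-th factor is `A` if `C k = false` and `Aᵀ` if `C k = true`. -/
def configProd {N m : ℕ} (C : Fin m → Bool) (A : Matrix (Fin N) (Fin N) ℝ) :
    Matrix (Fin N) (Fin N) ℝ :=
  (List.ofFn fun k => if C k then Aᵀ else A).prod

/-- The normalized trace `tr(A) = Tr(A)/N` of an `N × N` matrix. -/
def ntr {N : ℕ} (A : Matrix (Fin N) (Fin N) ℝ) : ℝ := A.trace / N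

/-- The family `X` consists of iid real random variables with mean `0`,
variance `1` and finite moments of all orders. -/
structure IIDEntries {Ω : Type*} [MeasurableSpace Ω] (μ : Measure Ω)
    (X : ℕ → ℕ → Ω → ℝ) : Prop where
  meas : ∀ a b, Measurable (X a b)
  indep : iIndepFun (fun p : ℕ × ℕ => X p.1 p.2) μ
  ident : ∀ a b, IdentDistrib (X a b) (X 0 0) μ μ
  mean_zero : ∫ ω, X 0 0 ω ∂μ = 0
  var_one : ∫ ω, (X 0 0 ω) ^ 2 ∂μ = 1
  moments : ∀ p : ℕ, Integrable (fun ω => (X 0 0 ω) ^ p) μ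

/-- A path `i : {1,…,m+1} → {1,…,N}` (0-indexed here) is closed if `i 1 = i (m+1)`. -/
def IsClosedPath {m N : ℕ} (i : Fin (m + 1) → Fin N) : Prop :=
  i 0 = i (Fin.last m)

/-- The `k`-th edge of a path, as an unordered pair. -/
def pathEdge {m N : ℕ} (i : Fin (m + 1) → Fin N) (k : Fin m) : Sym2 (Fin N) :=
  s(i k.castSucc, i k.succ)

/-- The number of indices at which the `k`-th edge of the path occurs. -/
def edgeCount {m N : ℕ} (i : Fin (m + 1) → Fin N) (k : Fin m) : ℕ :=
  (Finset.univ.filter fun l => pathEdge i l = pathEdge i k).card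

/-- A path is *social* if every edge, as an unordered pair, occurs at at least
two indices. -/
def Social {m N : ℕ} (i : Fin (m + 1) → Fin N) : Prop :=
  ∀ k, 2 ≤ edgeCount i k

/-- A path is *strictly paired* if every edge, as an unordered pair, occurs at
exactly two indices. -/
def StrictlyPaired {m N : ℕ} (i : Fin (m + 1) → Fin N) : Prop :=
  ∀ k, edgeCount i k = 2

/-- The number of colors a path passes through: the cardinality of its range. -/
def colors {m N : ℕ} (i : Fin (m + 1) → Fin N) : ℕ :=
  (Finset.univ.image i).card

/-- A path is *strictly polar paired* with respect to the configuration `C` if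
it is strictly paired and in each pair of equal edges one occurrence is starred
and the other unstarred. -/
def PolarPaired {m N : ℕ} (C : Fin m → Bool) (i : Fin (m + 1) → Fin N) : Prop :=
  StrictlyPaired i ∧ ∀ k l, k ≠ l → pathEdge i k = pathEdge i l → C k ≠ C l

/-- The constraints defining the path counting function: `i` is a closed path of
length `2n` on `[n+1]`, strictly polar paired w.r.t. `C`, passing through `n+1`
colors, and for each `k`: `(x (i k), x (i (k+1))) ∈ S` if `C k = x`, and
`(x (i (k+1)), x (i k)) ∈ S` if `C k = x*`. -/
def pathSatisfies (S : Set (ℝ × ℝ)) {n : ℕ} (C : Fin (2 * n) → Bool)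
    (x : Fin (n + 1) → ℝ) (i : Fin (2 * n + 1) → Fin (n + 1)) : Prop :=
  IsClosedPath i ∧ PolarPaired C i ∧ colors i = n + 1 ∧
    ∀ k : Fin (2 * n),
      if C k then (x (i k.succ), x (i k.castSucc)) ∈ S
      else (x (i k.castSucc), x (i k.succ)) ∈ S

/-- The path counting function `f_{S,C}^{n+1}`. -/
def pathCount (S : Set (ℝ × ℝ)) {n : ℕ} (C : Fin (2 * n) → Bool)
    (x : Fin (n + 1) → ℝ) : ℕ :=
  if Function.Injective x then
    (Finset.univ.filter fun i : Fin (2 * n + 1) → Fin (n + 1) => pathSatisfies S C x i).card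
  else 0

/-- Every social (closed) path of odd length `2n+1` on `[N]` passes through at
most `n+1` colors. -/
theorem social_path_odd_length_colors_le {n N : ℕ}
    (i : Fin (2 * n + 1 + 1) → Fin N) (hclosed : IsClosedPath i)
    (hsocial : Social i) :
    colors i ≤ n + 1 := by
  classical
  set E : Finset (Sym2 (Fin N)) := Finset.univ.image (pathEdge i) with hE
  -- Step 1: E.card ≤ n
  have hEcard : E.card ≤ n := by
    have hsum : (Finset.univ : Finset (Fin (2 * n + 1))).card
        = ∑ e ∈ E, (Finset.univ.filter (fun l => pathEdge i l = e)).card :=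
      Finset.card_eq_sum_card_image (pathEdge i) Finset.univ
    have h2 : ∑ e ∈ E, 2 ≤ ∑ e ∈ E, (Finset.univ.filter (fun l => pathEdge i l = e)).card := by
      apply Finset.sum_le_sum
      intro e he
      obtain ⟨k, -, hk⟩ := Finset.mem_image.mp he
      rw [← hk]
      simpa [edgeCount] using hsocial k
    have h3 : E.card * 2 ≤ 2 * n + 1 := by
      calc E.card * 2 = ∑ _e ∈ E, 2 := by rw [Finset.sum_const, smul_eq_mul]
        _ ≤ _ := h2
        _ = (Finset.univ : Finset (Fin (2 * n + 1))).card := hsum.symm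
        _ = 2 * n + 1 := by simp
    omega
  -- Step 2: vertex-edge induction
  set V : ℕ → Finset (Fin N) := fun k =>
    (Finset.univ.filter (fun j : Fin (2 * n + 1 + 1) => (j : ℕ) ≤ k)).image i with hV
  set Ek : ℕ → Finset (Sym2 (Fin N)) := fun k =>
    (Finset.univ.filter (fun j : Fin (2 * n + 1) => (j : ℕ) < k)).image (pathEdge i) with hEk
  have key : ∀ k, (V k).card ≤ (Ek k).card + 1 := by
    intro k
    induction k with
    | zero =>
      have hV0 : V 0 ⊆ {i 0} := by
        intro w hw
        simp only [hV, Finset.mem_image, Finset.mem_filter] at hw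
        obtain ⟨j, ⟨-, hj⟩, rfl⟩ := hw
        have hj0 : j = 0 := Fin.ext (Nat.le_zero.mp hj)
        simp [hj0]
      calc (V 0).card ≤ 1 := by simpa using Finset.card_le_card hV0
        _ ≤ _ := Nat.le_add_left 1 _
    | succ k ih =>
      by_cases hk : k + 1 ≤ 2 * n + 1
      · set v : Fin N := i ⟨k + 1, by omega⟩ with hv
        set kk : Fin (2 * n + 1) := ⟨k, by omega⟩ with hkk
        have hkkval : (kk : ℕ) = k := rfl
        have hVsub : V (k + 1) ⊆ insert v (V k) := by
          intro w hw
          simp only [hV, Finset.mem_image, Finset.mem_filter] at hw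
          obtain ⟨j, ⟨-, hj⟩, rfl⟩ := hw
          rcases Nat.lt_or_ge (j : ℕ) (k + 1) with h | h
          · apply Finset.mem_insert_of_mem
            simp only [hV, Finset.mem_image, Finset.mem_filter]
            exact ⟨j, ⟨Finset.mem_univ j, Nat.lt_succ_iff.mp h⟩, rfl⟩
          · have hje : j = ⟨k + 1, by omega⟩ := Fin.ext (le_antisymm hj h)
            rw [hje]
            exact Finset.mem_insert_self _ _
        have hEeq : Ek (k + 1) = insert (pathEdge i kk) (Ek k) := by
          ext e
          simp only [hEk, Finset.mem_image, Finset.mem_filter, Finset.mem_insert]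
          constructor
          · rintro ⟨j, ⟨-, hj⟩, rfl⟩
            rcases Nat.lt_or_ge (j : ℕ) k with h | h
            · exact Or.inr ⟨j, ⟨Finset.mem_univ j, h⟩, rfl⟩
            · have hje : j = kk := Fin.ext (by omega)
              exact Or.inl (by rw [hje])
          · rintro (rfl | ⟨j, ⟨-, hj⟩, rfl⟩)
            · exact ⟨kk, ⟨Finset.mem_univ _, by omega⟩, rfl⟩
            · exact ⟨j, ⟨Finset.mem_univ _, by omega⟩, rfl⟩
        by_cases hvV : v ∈ V k
        · have h1 : (V (k + 1)).card ≤ (V k).card := by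
            have := Finset.card_le_card hVsub
            rwa [Finset.insert_eq_self.mpr hvV] at this
          have h2 : (Ek k).card ≤ (Ek (k + 1)).card := by
            apply Finset.card_le_card
            rw [hEeq]
            exact Finset.subset_insert _ _
          omega
        · have hen : pathEdge i kk ∉ Ek k := by
            intro hmem
            simp only [hEk, Finset.mem_image, Finset.mem_filter] at hmem
            obtain ⟨j, ⟨-, hj⟩, hje⟩ := hmem
            have hvmem : v ∈ pathEdge i kk := by
              rw [pathEdge]
              exact Sym2.mem_mk_right _ _
            rw [← hje, pathEdge, Sym2.mem_iff] at hvmem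
            apply hvV
            rcases hvmem with h | h
            · exact Finset.mem_image.mpr ⟨j.castSucc,
                Finset.mem_filter.mpr ⟨Finset.mem_univ _,
                  by simp only [Fin.coe_castSucc]; omega⟩, h.symm⟩
            · exact Finset.mem_image.mpr ⟨j.succ,
                Finset.mem_filter.mpr ⟨Finset.mem_univ _,
                  by simp only [Fin.val_succ]; omega⟩, h.symm⟩
          have hEcard' : (Ek (k + 1)).card = (Ek k).card + 1 := by
            rw [hEeq, Finset.card_insert_of_notMem hen]
          have h1 : (V (k + 1)).card ≤ (V k).card + 1 :=
            le_trans (Finset.card_le_card hVsub) (Finset.card_insert_le _ _)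
          omega
      · have hVsub : V (k + 1) ⊆ V k := by
          intro w hw
          simp only [hV, Finset.mem_image, Finset.mem_filter] at hw ⊢
          obtain ⟨j, ⟨-, hj⟩, rfl⟩ := hw
          exact ⟨j, ⟨Finset.mem_univ _, by have := j.isLt; omega⟩, rfl⟩
        have hEsub : Ek k ⊆ Ek (k + 1) := by
          intro e he
          simp only [hEk, Finset.mem_image, Finset.mem_filter] at he ⊢
          obtain ⟨j, ⟨-, hj⟩, rfl⟩ := he
          exact ⟨j, ⟨Finset.mem_univ _, by omega⟩, rfl⟩
        have := Finset.card_le_card hVsub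
        have := Finset.card_le_card hEsub
        omega
  have hVm : V (2 * n + 1) = Finset.univ.image i := by
    simp only [hV]
    congr 1
    rw [Finset.filter_true_of_mem]
    intro j _
    exact Nat.lt_succ_iff.mp j.isLt
  have hEm : Ek (2 * n + 1) = E := by
    simp only [hEk, hE]
    congr 1
    rw [Finset.filter_true_of_mem]
    intro j _
    exact j.isLt
  have := key (2 * n + 1)
  rw [hVm, hEm] at this
  calc colors i = (Finset.univ.image i).card := rfl
    _ ≤ E.card + 1 := this
    _ ≤ n + 1 := by omega
end
end

section
/- Every social path of even length 2n on [N] passes through at most n+1 colors; that is, if i : {1,…,2n+1} → {1,…,N} satisfies i(1)=i(2n+1) and every edge {i(k),i(k+1)} (as an unordered pair) occurs at at least two indices k ∈ {1,…,2n}, then the range of i has cardinality at most n+1. -/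
open MeasureTheory ProbabilityTheory Matrix Filter

attribute [local instance] Classical.propDecidable

noncomputable section

/-- Every social (closed) path of even length `2n` on `[N]` passes through at
most `n+1` colors. -/
theorem social_path_even_length_colors_le {n N : ℕ}
    (i : Fin (2 * n + 1) → Fin N) (hclosed : IsClosedPath i)
    (hsocial : Social i) :
    colors i ≤ n + 1 := by
  classical
  set j : ℕ → Fin N := fun t => i ⟨min t (2 * n), by omega⟩ with hj
  set e : ℕ → Sym2 (Fin N) := fun t => s(j t, j (t + 1)) with he
  have hedge_eq : ∀ t (ht : t < 2 * n), e t = pathEdge i ⟨t, ht⟩ := by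
    intro t ht
    have h1 : j t = i (Fin.castSucc ⟨t, ht⟩) := by
      simp only [hj]; congr 1; ext; simp; omega
    have h2 : j (t + 1) = i (Fin.succ ⟨t, ht⟩) := by
      simp only [hj]; congr 1; ext; simp; omega
    simp only [he, pathEdge, h1, h2]
  have key : ∀ k : ℕ, ((Finset.range (k + 1)).image j).card ≤
      1 + ((Finset.range k).image e).card := by
    intro k
    induction k with
    | zero => simp
    | succ k ih =>
      by_cases h : j (k + 1) ∈ (Finset.range (k + 1)).image j
      · have h1 : (Finset.range (k + 2)).image j = (Finset.range (k + 1)).image j := by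
          rw [Finset.range_add_one, Finset.image_insert, Finset.insert_eq_self.2 h]
        rw [h1]
        refine ih.trans ?_
        have : (Finset.range k).image e ⊆ (Finset.range (k + 1)).image e :=
          Finset.image_subset_image (Finset.range_subset_range.2 (by omega))
        have := Finset.card_le_card this
        omega
      · have hnew : e k ∉ (Finset.range k).image e := by
          intro hmem
          rcases Finset.mem_image.1 hmem with ⟨t, ht, hte⟩
          have hm : j (k + 1) ∈ e t := by rw [hte]; simp [he]
          rw [he] at hm
          have ht' := Finset.mem_range.1 ht
          rcases Sym2.mem_iff.1 hm with h1 | h1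
          · exact h (Finset.mem_image.2 ⟨t, Finset.mem_range.2 (by omega), h1.symm⟩)
          · exact h (Finset.mem_image.2 ⟨t + 1, Finset.mem_range.2 (by omega), h1.symm⟩)
        have h1 : (Finset.range (k + 2)).image j
            = insert (j (k + 1)) ((Finset.range (k + 1)).image j) := by
          rw [Finset.range_add_one, Finset.image_insert]
        have h2 : (Finset.range (k + 1)).image e
            = insert (e k) ((Finset.range k).image e) := by
          rw [Finset.range_add_one, Finset.image_insert]
        rw [h1, h2, Finset.card_insert_of_notMem h, Finset.card_insert_of_notMem hnew]
        omega
  have himg : Finset.univ.image i = (Finset.range (2 * n + 1)).image j := by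
    ext x
    simp only [Finset.mem_image, Finset.mem_univ, true_and, Finset.mem_range]
    constructor
    · rintro ⟨t, rfl⟩
      refine ⟨t, t.isLt, ?_⟩
      simp only [hj]; congr 1; ext; simp; omega
    · rintro ⟨t, ht, rfl⟩
      exact ⟨⟨min t (2 * n), by omega⟩, rfl⟩
  have himg2 : (Finset.range (2 * n)).image e = Finset.univ.image (pathEdge i) := by
    ext x
    simp only [Finset.mem_image, Finset.mem_range, Finset.mem_univ, true_and]
    constructor
    · rintro ⟨t, ht, rfl⟩
      exact ⟨⟨t, ht⟩, (hedge_eq t ht).symm⟩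
    · rintro ⟨t, rfl⟩
      exact ⟨(t : ℕ), t.isLt, hedge_eq t t.isLt⟩
  have hedge : (Finset.univ.image (pathEdge i)).card ≤ n := by
    have hsum : (Finset.univ : Finset (Fin (2 * n))).card =
        ∑ b ∈ Finset.univ.image (pathEdge i),
          (Finset.univ.filter fun l => pathEdge i l = b).card :=
      Finset.card_eq_sum_card_fiberwise (fun x _ => Finset.mem_image_of_mem _ (Finset.mem_univ x))
    have hge : ∀ b ∈ Finset.univ.image (pathEdge i),
        2 ≤ (Finset.univ.filter fun l => pathEdge i l = b).card := by
      intro b hb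
      rcases Finset.mem_image.1 hb with ⟨k, _, rfl⟩
      exact hsocial k
    have h2 : 2 * (Finset.univ.image (pathEdge i)).card ≤
        ∑ b ∈ Finset.univ.image (pathEdge i),
          (Finset.univ.filter fun l => pathEdge i l = b).card := by
      calc 2 * (Finset.univ.image (pathEdge i)).card
          = ∑ _b ∈ Finset.univ.image (pathEdge i), 2 := by
            rw [Finset.sum_const]; ring
        _ ≤ _ := Finset.sum_le_sum hge
    simp only [Finset.card_univ, Fintype.card_fin] at hsum
    omega
  have := key (2 * n)
  rw [himg2] at this
  calc colors i = ((Finset.range (2 * n + 1)).image j).card := by rw [colors, himg]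
    _ ≤ 1 + (Finset.univ.image (pathEdge i)).card := this
    _ ≤ n + 1 := by omega
end
end

section
/- Let n ≥ 1 and let i be a social path of length 2n on [N] that passes through exactly n+1 colors. Then i is strictly paired: every edge of i, as an unordered pair, occurs at exactly two indices k ∈ {1,…,2n}. -/
open MeasureTheory ProbabilityTheory Matrix Filter

attribute [local instance] Classical.propDecidable

noncomputable section

/-- Let `n ≥ 1` and let `i` be a social closed path of length `2n` on `[N]`
passing through exactly `n+1` colors.  Then `i` is strictly paired: every edge
occurs at exactly two indices. -/
theorem social_path_max_colors_strictly_paired {n N : ℕ} (hn : 1 ≤ n)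
    (i : Fin (2 * n + 1) → Fin N) (hclosed : IsClosedPath i)
    (hsocial : Social i) (hcolors : colors i = n + 1) :
    StrictlyPaired i := by
  classical
  have hpos : 0 < 2 * n + 1 := by omega
  set j : ℕ → Fin N := fun m => i ⟨m % (2 * n + 1), Nat.mod_lt _ hpos⟩ with hj
  have hj_lt : ∀ (m : ℕ) (h : m < 2 * n + 1), j m = i ⟨m, h⟩ := by
    intro m h
    simp only [hj]
    congr 1
    exact Fin.ext (Nat.mod_eq_of_lt h)
  set E : Finset (Sym2 (Fin N)) := Finset.univ.image (pathEdge i) with hE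
  -- the first-edge map
  set F : Fin N → Sym2 (Fin N) :=
    fun v => if h : ∃ m, j m = v then s(j (Nat.find h - 1), v) else s(v, v) with hF
  have hFspec : ∀ v ∈ (Finset.univ.image i).erase (i 0),
      F v ∈ E ∧ ∃ t : ℕ, 0 < t ∧ t < 2 * n + 1 ∧ j t = v ∧
        (∀ s, j s = v → t ≤ s) ∧ F v = s(j (t - 1), v) := by
    intro v hv
    rw [Finset.mem_erase, Finset.mem_image] at hv
    obtain ⟨hv0, u, -, hu⟩ := hv
    have hex : ∃ m, j m = v := ⟨(u : ℕ), by rw [hj_lt _ u.isLt]; simpa using hu⟩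
    set t := Nat.find hex with ht
    have hspec : j t = v := Nat.find_spec hex
    have hmin : ∀ s, j s = v → t ≤ s := fun s hs => Nat.find_min' hex hs
    have htlt : t < 2 * n + 1 := by
      have := hmin (u : ℕ) (by rw [hj_lt _ u.isLt]; simpa using hu)
      omega
    have htpos : 0 < t := by
      rcases Nat.eq_zero_or_pos t with h0 | h0
      · exfalso
        apply hv0
        rw [← hspec, h0, hj_lt 0 (by omega)]
        congr 1
      · exact h0
    have hFv : F v = s(j (t - 1), v) := by
      simp only [hF]
      rw [dif_pos hex]
    refine ⟨?_, t, htpos, htlt, hspec, hmin, hFv⟩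
    rw [hFv, hE, Finset.mem_image]
    refine ⟨⟨t - 1, by omega⟩, Finset.mem_univ _, ?_⟩
    have h1 : (⟨t - 1, by omega⟩ : Fin (2 * n)).castSucc = (⟨t - 1, by omega⟩ : Fin (2 * n + 1)) := rfl
    have h2 : (⟨t - 1, by omega⟩ : Fin (2 * n)).succ = (⟨t, by omega⟩ : Fin (2 * n + 1)) := by
      apply Fin.ext
      simp
      omega
    rw [pathEdge, h1, h2, ← hj_lt (t - 1) (by omega), ← hj_lt t (by omega), hspec]
  -- F is injective on the vertices other than i 0
  have hinj : Set.InjOn F ((Finset.univ.image i).erase (i 0)) := by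
    intro v hv w hw hvw
    obtain ⟨-, tv, htv0, -, hjv, hminv, hFv⟩ := hFspec v hv
    obtain ⟨-, tw, htw0, -, hjw, hminw, hFw⟩ := hFspec w hw
    rw [hFv, hFw, Sym2.eq_iff] at hvw
    rcases hvw with ⟨-, h⟩ | ⟨h1, h2⟩
    · exact h
    · exfalso
      have hw' : tw ≤ tv - 1 := hminw _ h1
      have hv' : tv ≤ tw - 1 := hminv _ h2.symm
      omega
  have hi0 : i 0 ∈ Finset.univ.image i := Finset.mem_image_of_mem i (Finset.mem_univ 0)
  have hcardE : n ≤ E.card := by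
    have h1 := Finset.card_le_card_of_injOn F (fun v hv => (hFspec v hv).1) hinj
    rw [Finset.card_erase_of_mem hi0] at h1
    rw [colors] at hcolors
    omega
  have hsum : ∑ e ∈ E, (Finset.univ.filter fun l : Fin (2 * n) => pathEdge i l = e).card
      = 2 * n := by
    rw [hE, ← Finset.card_eq_sum_card_image]
    simp
  have hterm : ∀ e ∈ E,
      2 ≤ (Finset.univ.filter fun l : Fin (2 * n) => pathEdge i l = e).card := by
    intro e he
    rw [hE, Finset.mem_image] at he
    obtain ⟨k, -, hk⟩ := he
    have h2 := hsocial k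
    rw [edgeCount] at h2
    rwa [hk] at h2
  have hsum2 : (∑ e ∈ E, 2 : ℕ) = 2 * E.card := by
    rw [Finset.sum_const, smul_eq_mul, Nat.mul_comm]
  have hle2 : (∑ e ∈ E, 2 : ℕ) ≤ ∑ e ∈ E,
      (Finset.univ.filter fun l : Fin (2 * n) => pathEdge i l = e).card :=
    Finset.sum_le_sum hterm
  have hEeq : (∑ e ∈ E, 2 : ℕ) = ∑ e ∈ E,
      (Finset.univ.filter fun l : Fin (2 * n) => pathEdge i l = e).card := by omega
  have heach := (Finset.sum_eq_sum_iff_of_le hterm).mp hEeq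
  intro k
  have hmem : pathEdge i k ∈ E := by
    rw [hE]; exact Finset.mem_image_of_mem _ (Finset.mem_univ k)
  have := heach _ hmem
  rw [edgeCount]
  omega
end
end

section
/- Let {X_{ab}} be a family of iid real random variables with mean 0 and finite moments of all orders, let C be a configuration of length m, and let i be a path of length m on [N] that is not social, i.e. some edge {i(k),i(k+1)}, as an unordered pair, occurs at exactly one index k. Then E[∏_{k=1}^{m} X^{C(k)}_{i(k),i(k+1)}] = 0. -/
open MeasureTheory ProbabilityTheory Matrix Filter

attribute [local instance] Classical.propDecidable

noncomputable section

/-- Let `{X a b}` be iid real random variables with mean `0` and finite moments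
of all orders, `C` a configuration of length `m`, and `i` a closed path of
length `m` on `[N]` that is not social, i.e. some edge occurs at exactly one
index.  Then `E[∏_k X^{C k}_{i k, i (k+1)}] = 0`. -/
theorem nonsocial_path_mean_zero {m N : ℕ}
    {Ω : Type} [MeasurableSpace Ω] (μ : Measure Ω) [IsProbabilityMeasure μ]
    (X : ℕ → ℕ → Ω → ℝ)
    (hmeas : ∀ a b, Measurable (X a b))
    (hindep : iIndepFun
      (fun p : ℕ × ℕ => X p.1 p.2) μ)
    (hident : ∀ a b, IdentDistrib (X a b) (X 0 0) μ μ)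
    (hmean : ∫ ω, X 0 0 ω ∂μ = 0)
    (hmom : ∀ p : ℕ, Integrable (fun ω => (X 0 0 ω) ^ p) μ)
    (C : Fin m → Bool) (i : Fin (m + 1) → Fin N)
    (hclosed : IsClosedPath i)
    (hnonsocial : ∃ k : Fin m, edgeCount i k = 1) :
    (∫ ω, ∏ k : Fin m,
        (if C k then X (i k.succ).val (i k.castSucc).val ω
         else X (i k.castSucc).val (i k.succ).val ω) ∂μ) = 0 := by
  classical
  obtain ⟨k₀, hk₀⟩ := hnonsocial
  set g : Fin m → ℕ × ℕ := fun k =>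
    if C k then ((i k.succ).val, (i k.castSucc).val)
    else ((i k.castSucc).val, (i k.succ).val) with hg
  -- The filter of indices with the same edge as k₀ is {k₀}
  have hedge : (Finset.univ.filter fun l => pathEdge i l = pathEdge i k₀) = {k₀} := by
    have hcard : (Finset.univ.filter fun l => pathEdge i l = pathEdge i k₀).card = 1 := hk₀
    obtain ⟨a, ha⟩ := Finset.card_eq_one.mp hcard
    have hk₀mem : k₀ ∈ Finset.univ.filter fun l => pathEdge i l = pathEdge i k₀ := by
      simp
    rw [ha] at hk₀mem ⊢
    simp only [Finset.mem_singleton] at hk₀mem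
    rw [hk₀mem]
  -- g l = g k₀ implies l = k₀
  have hgfib : (Finset.univ.filter fun l => g l = g k₀) = {k₀} := by
    apply Finset.Subset.antisymm
    · intro l hl
      simp only [Finset.mem_filter, Finset.mem_univ, true_and] at hl
      have hedgel : pathEdge i l = pathEdge i k₀ := by
        have h1 : ((i l.castSucc).val = (i k₀.castSucc).val ∧
            (i l.succ).val = (i k₀.succ).val) ∨
            ((i l.castSucc).val = (i k₀.succ).val ∧
            (i l.succ).val = (i k₀.castSucc).val) := by
          simp only [hg] at hl
          by_cases hCl : C l <;> by_cases hCk : C k₀ <;>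
            simp [hCl, hCk, Prod.ext_iff] at hl <;> tauto
        rcases h1 with ⟨h1, h2⟩ | ⟨h1, h2⟩
        · unfold pathEdge
          rw [Fin.val_injective h1, Fin.val_injective h2]
        · unfold pathEdge
          rw [Fin.val_injective h1, Fin.val_injective h2, Sym2.eq_swap]
      have : l ∈ Finset.univ.filter fun l => pathEdge i l = pathEdge i k₀ := by
        simp [hedgel]
      rwa [hedge] at this
    · intro l hl
      simp only [Finset.mem_singleton] at hl
      simp [hl]
  set T : Finset (ℕ × ℕ) := Finset.univ.image g with hT
  set n : ℕ × ℕ → ℕ := fun p => (Finset.univ.filter fun k => g k = p).card with hn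
  set Z : ℕ × ℕ → Ω → ℝ := fun p ω => (X p.1 p.2 ω) ^ (n p) with hZ
  -- rewrite the integrand
  have hinteg : ∀ ω, (∏ k : Fin m,
      (if C k then X (i k.succ).val (i k.castSucc).val ω
       else X (i k.castSucc).val (i k.succ).val ω)) = ∏ p ∈ T, Z p ω := by
    intro ω
    have : (∏ k : Fin m,
        (if C k then X (i k.succ).val (i k.castSucc).val ω
         else X (i k.castSucc).val (i k.succ).val ω)) =
        ∏ k : Fin m, X (g k).1 (g k).2 ω := by
      apply Finset.prod_congr rfl
      intro k _
      by_cases hC : C k <;> simp [hg, hC]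
    rw [this, Finset.prod_comp (fun p : ℕ × ℕ => X p.1 p.2 ω) g]
  -- independence of the Z family
  have hZindep : iIndepFun
      Z μ := by
    have := hindep.comp (fun p : ℕ × ℕ => fun x : ℝ => x ^ (n p))
      (fun p => measurable_id.pow_const (n p))
    exact this
  have hZmeas : ∀ p : ℕ × ℕ, Measurable (Z p) :=
    fun p => (hmeas p.1 p.2).pow_const (n p)
  have hZident : ∀ p : ℕ × ℕ, IdentDistrib (Z p) (fun ω => (X 0 0 ω) ^ (n p)) μ μ :=
    fun p => (hident p.1 p.2).comp (measurable_id.pow_const (n p))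
  have hZint : ∀ p : ℕ × ℕ, Integrable (Z p) μ := fun p =>
    (hZident p).symm.integrable_iff.mp (hmom (n p))
  -- integrability of products over finsets
  have hprodint : ∀ s : Finset (ℕ × ℕ), Integrable (∏ p ∈ s, Z p) μ := by
    intro s
    induction s using Finset.induction_on with
    | empty =>
      rw [Finset.prod_empty]
      exact integrable_const 1
    | insert _ _ hps ih =>
      rename_i a s
      rw [Finset.prod_insert hps]
      exact ((hZindep.indepFun_finsetProd_of_notMem hZmeas hps).symm).integrable_mul
        (hZint a) ih
  -- main computation
  set p₀ : ℕ × ℕ := g k₀ with hp₀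
  have hp₀T : p₀ ∈ T := Finset.mem_image_of_mem g (Finset.mem_univ k₀)
  have hnp₀ : n p₀ = 1 := by
    rw [hn]
    simp only
    rw [hgfib]
    simp
  have hsplit : (∏ p ∈ T, Z p) = (∏ p ∈ T.erase p₀, Z p) * Z p₀ :=
    (Finset.prod_erase_mul T Z hp₀T).symm
  have hindep2 : IndepFun (∏ p ∈ T.erase p₀, Z p) (Z p₀) μ :=
    hZindep.indepFun_finsetProd_of_notMem hZmeas (Finset.notMem_erase p₀ T)
  have hEZ : ∫ ω, Z p₀ ω ∂μ = 0 := by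
    have h1 : ∫ ω, Z p₀ ω ∂μ = ∫ ω, (X 0 0 ω) ^ (n p₀) ∂μ :=
      (hZident p₀).integral_eq
    rw [h1, hnp₀]
    simpa using hmean
  calc (∫ ω, ∏ k : Fin m,
        (if C k then X (i k.succ).val (i k.castSucc).val ω
         else X (i k.castSucc).val (i k.succ).val ω) ∂μ)
      = ∫ ω, (∏ p ∈ T, Z p) ω ∂μ := by
        apply integral_congr_ae
        filter_upwards with ω
        rw [hinteg ω]
        simp [Finset.prod_apply]
    _ = ∫ ω, ((∏ p ∈ T.erase p₀, Z p) * Z p₀) ω ∂μ := by rw [hsplit]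
    _ = (∫ ω, (∏ p ∈ T.erase p₀, Z p) ω ∂μ) * ∫ ω, Z p₀ ω ∂μ :=
        hindep2.integral_mul_eq_mul_integral (hprodint _).aestronglyMeasurable (hZint p₀).aestronglyMeasurable
    _ = 0 := by rw [hEZ, mul_zero]
end
end

section
/- Let C be a configuration of length 2n and let N ≥ n+1. For an index k ∈ {1,…,2n+1} and a color s ∈ {1,…,N}, let P(k,s) be the number of paths i of length 2n on [N] that are strictly polar paired with respect to C, pass through n+1 colors, and satisfy i(k)=s. Then P(k_1,s_1) = P(k_2,s_2) for all indices k_1,k_2 and colors s_1,s_2, and N · P(k,s) equals the total number of paths of length 2n on [N] that are strictly polar paired with respect to C and pass through n+1 colors. -/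
open MeasureTheory ProbabilityTheory Matrix Filter

attribute [local instance] Classical.propDecidable

noncomputable section

/-- `P k s`: the number of closed paths of length `2n` on `[N]` that are
strictly polar paired with respect to `C`, pass through `n+1` colors, and take
the value `s` at the index `k`. -/
def polarConstraintPathCountAt (n N : ℕ) (C : Fin (2 * n) → Bool)
    (k : Fin (2 * n + 1)) (s : Fin N) : ℕ :=
  (Finset.univ.filter fun i : Fin (2 * n + 1) → Fin N =>
    IsClosedPath i ∧ PolarPaired C i ∧ colors i = n + 1 ∧ i k = s).card

/-- The total number of closed paths of length `2n` on `[N]` that are strictly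
polar paired with respect to `C` and pass through `n+1` colors. -/
def polarConstraintPathCount (n N : ℕ) (C : Fin (2 * n) → Bool) : ℕ :=
  (Finset.univ.filter fun i : Fin (2 * n + 1) → Fin N =>
    IsClosedPath i ∧ PolarPaired C i ∧ colors i = n + 1).card

lemma pathEdge_comp {m N : ℕ} (σ : Equiv.Perm (Fin N)) (i : Fin (m + 1) → Fin N)
    (k : Fin m) : pathEdge (σ ∘ i) k = Sym2.map σ (pathEdge i k) := rfl

lemma edgeCount_comp {m N : ℕ} (σ : Equiv.Perm (Fin N)) (i : Fin (m + 1) → Fin N)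
    (k : Fin m) : edgeCount (σ ∘ i) k = edgeCount i k := by
  unfold edgeCount
  congr 1
  apply Finset.filter_congr
  intro l _
  simp only [pathEdge_comp]
  constructor
  · exact fun h => Sym2.map.injective σ.injective h
  · exact fun h => by rw [h]

lemma isClosedPath_comp {m N : ℕ} (σ : Equiv.Perm (Fin N)) (i : Fin (m + 1) → Fin N) :
    IsClosedPath (σ ∘ i) ↔ IsClosedPath i := by
  unfold IsClosedPath
  exact σ.injective.eq_iff

lemma polarPaired_comp {m N : ℕ} (C : Fin m → Bool) (σ : Equiv.Perm (Fin N))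
    (i : Fin (m + 1) → Fin N) : PolarPaired C (σ ∘ i) ↔ PolarPaired C i := by
  unfold PolarPaired StrictlyPaired
  simp only [edgeCount_comp, pathEdge_comp]
  constructor
  · rintro ⟨h1, h2⟩
    exact ⟨h1, fun k l hkl he => h2 k l hkl (by rw [he])⟩
  · rintro ⟨h1, h2⟩
    exact ⟨h1, fun k l hkl he => h2 k l hkl (Sym2.map.injective σ.injective he)⟩

lemma colors_comp {m N : ℕ} (σ : Equiv.Perm (Fin N)) (i : Fin (m + 1) → Fin N) :
    colors (σ ∘ i) = colors i := by
  unfold colors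
  rw [show Finset.univ.image (σ ∘ i) = (Finset.univ.image i).image σ by
    rw [Finset.image_image]]
  exact Finset.card_image_of_injective _ σ.injective

lemma countAt_perm (n N : ℕ) (C : Fin (2 * n) → Bool) (k : Fin (2 * n + 1))
    (σ : Equiv.Perm (Fin N)) (s : Fin N) :
    polarConstraintPathCountAt n N C k (σ s) = polarConstraintPathCountAt n N C k s := by
  unfold polarConstraintPathCountAt
  apply Finset.card_bij' (fun i _ => σ.symm ∘ i) (fun i _ => σ ∘ i)
  · intro i hi
    simp only [Finset.mem_filter, Finset.mem_univ, true_and] at hi ⊢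
    obtain ⟨h1, h2, h3, h4⟩ := hi
    refine ⟨(isClosedPath_comp σ.symm i).2 h1, (polarPaired_comp C σ.symm i).2 h2,
      by rw [colors_comp]; exact h3, ?_⟩
    simp [Function.comp, h4]
  · intro i hi
    simp only [Finset.mem_filter, Finset.mem_univ, true_and] at hi ⊢
    obtain ⟨h1, h2, h3, h4⟩ := hi
    refine ⟨(isClosedPath_comp σ i).2 h1, (polarPaired_comp C σ i).2 h2,
      by rw [colors_comp]; exact h3, ?_⟩
    simp [Function.comp, h4]
  · intro i _; funext l; simp
  · intro i _; funext l; simp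

lemma countAt_sum (n N : ℕ) (C : Fin (2 * n) → Bool) (k : Fin (2 * n + 1)) :
    ∑ s : Fin N, polarConstraintPathCountAt n N C k s = polarConstraintPathCount n N C := by
  unfold polarConstraintPathCountAt polarConstraintPathCount
  rw [Finset.card_eq_sum_card_fiberwise (f := fun i => i k)
    (t := Finset.univ) (fun _ _ => Finset.mem_univ _)]
  apply Finset.sum_congr rfl
  intro s _
  congr 1
  rw [Finset.filter_filter]
  apply Finset.filter_congr
  intro i _
  tauto

/-- For `N ≥ n+1`, the count `P k s` of strictly polar paired closed paths of
length `2n` on `[N]` with `n+1` colors and `i k = s` does not depend on `k` or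
`s`, and `N · P k s` equals the total number of such paths. -/
theorem polarConstraintPathCountAt_const {n N : ℕ} (hN : n + 1 ≤ N)
    (C : Fin (2 * n) → Bool) :
    (∀ (k₁ k₂ : Fin (2 * n + 1)) (s₁ s₂ : Fin N),
      polarConstraintPathCountAt n N C k₁ s₁ = polarConstraintPathCountAt n N C k₂ s₂) ∧
    (∀ (k : Fin (2 * n + 1)) (s : Fin N),
      N * polarConstraintPathCountAt n N C k s = polarConstraintPathCount n N C) := by
  have hconst : ∀ (k : Fin (2 * n + 1)) (s₁ s₂ : Fin N),
      polarConstraintPathCountAt n N C k s₁ = polarConstraintPathCountAt n N C k s₂ := by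
    intro k s₁ s₂
    have := countAt_perm n N C k (Equiv.swap s₁ s₂) s₂
    rwa [Equiv.swap_apply_right] at this
  have hmul : ∀ (k : Fin (2 * n + 1)) (s : Fin N),
      N * polarConstraintPathCountAt n N C k s = polarConstraintPathCount n N C := by
    intro k s
    rw [← countAt_sum n N C k]
    rw [Finset.sum_congr rfl (fun s' _ => hconst k s' s)]
    simp [Finset.sum_const, mul_comm]
  refine ⟨?_, hmul⟩
  intro k₁ k₂ s₁ s₂
  have hNpos : 0 < N := lt_of_lt_of_le (Nat.succ_pos n) hN
  have := (hmul k₁ s₁).trans (hmul k₂ s₂).symm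
  exact Nat.eq_of_mul_eq_mul_left hNpos this
end
end

section
/- There exists a universal constant K such that for every pattern S in [0,1]^2, every n ≥ 1 and every configuration C of length 2n, the normalized integral of the path counting function satisfies (1/(n+1)!) ∫_{[0,1]^{n+1}} f_{S,C}^{n+1}(x_1,…,x_{n+1}) dx ≤ K^{n}. In particular, the asymptotic starred moments of a patterned matrix grow at most exponentially in n and satisfy Carleman's condition. -/
open MeasureTheory ProbabilityTheory Matrix Filter

attribute [local instance] Classical.propDecidable

noncomputable section

namespace PCAux

section Dedup

variable {V : Type*} [DecidableEq V]

/-- One step of first-occurrence dedup. -/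
def ddpStep (acc : List V) (a : V) : List V := if a ∈ acc then acc else acc ++ [a]

/-- First-occurrence dedup of a list. -/
def ddp (l : List V) : List V := l.foldl ddpStep List.nil

lemma mem_foldl_ddpStep {l acc : List V} {x : V} :
    x ∈ l.foldl ddpStep acc ↔ x ∈ acc ∨ x ∈ l := by
  induction l generalizing acc with
  | nil => simp
  | cons a l ih =>
      simp only [List.foldl_cons, ih, ddpStep, List.mem_cons]
      by_cases h : a ∈ acc
      · simp only [h, if_true]
        constructor
        · tauto
        · rintro (h' | h' | h') <;> try tauto
          subst h'; tauto
      · simp only [h, if_false, List.mem_append, List.mem_singleton]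
        tauto

lemma nodup_foldl_ddpStep {l acc : List V} (h : acc.Nodup) : (l.foldl ddpStep acc).Nodup := by
  induction l generalizing acc with
  | nil => simpa
  | cons a l ih =>
      simp only [List.foldl_cons]
      apply ih
      unfold ddpStep
      split
      · exact h
      · rename_i hmem
        simp [List.nodup_append, h, hmem]
        exact fun b hb hba => hmem (hba ▸ hb)

lemma prefix_foldl_ddpStep (l acc : List V) : acc <+: l.foldl ddpStep acc := by
  induction l generalizing acc with
  | nil => simp
  | cons a l ih =>
      refine List.IsPrefix.trans ?_ (ih (ddpStep acc a))
      unfold ddpStep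
      split
      · exact List.prefix_refl _
      · exact ⟨[a], rfl⟩

lemma ddp_concat (l : List V) (a : V) : ddp (l ++ [a]) = ddpStep (ddp l) a := by
  simp [ddp, List.foldl_append]

lemma ddp_prefix_concat (l : List V) (a : V) : ddp l <+: ddp (l ++ [a]) := by
  rw [ddp_concat]
  unfold ddpStep
  split
  · exact List.prefix_refl _
  · exact ⟨[a], rfl⟩

lemma mem_ddp {l : List V} {x : V} : x ∈ ddp l ↔ x ∈ l := by
  unfold ddp; rw [mem_foldl_ddpStep]; simp

lemma ddp_nodup (l : List V) : (ddp l).Nodup := nodup_foldl_ddpStep List.nodup_nil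

lemma ddp_concat_of_not_mem {l : List V} {a : V} (h : a ∉ l) :
    ddp (l ++ [a]) = ddp l ++ [a] := by
  rw [ddp_concat]
  unfold ddpStep
  rw [if_neg]
  rw [mem_ddp]
  exact h

lemma toFinset_ddp (l : List V) : (ddp l).toFinset = l.toFinset := by
  ext x; simp [mem_ddp]

lemma length_ddp (l : List V) : (ddp l).length = l.toFinset.card := by
  rw [← toFinset_ddp, List.toFinset_card_of_nodup (ddp_nodup l)]

end Dedup


section Walk

variable {V : Type*} [DecidableEq V] [Fintype V]

/-- The `j`-th edge of the walk `w`. -/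
def ed (w : ℕ → V) (j : ℕ) : Sym2 V := s(w j, w (j + 1))

/-- Number of occurrences of the edge `e` among the first `k` edges of `w`. -/
def cnt (w : ℕ → V) (k : ℕ) (e : Sym2 V) : ℕ :=
  ((Finset.range k).filter fun j => ed w j = e).card

/-- A good walk: strictly paired, surjective, of length `2 * (card V - 1)`. -/
def GoodWalk (w : ℕ → V) (m : ℕ) : Prop :=
  (∀ j < m, cnt w m (ed w j) = 2) ∧ (∀ v : V, ∃ j ≤ m, w j = v) ∧
    m + 2 = 2 * Fintype.card V

/-- First index at which `v` occurs in `w`. -/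
def fIdx (w : ℕ → V) (v : V) : ℕ := sInf {j | w j = v}

/-- The parent of `v`: the vertex preceding the first occurrence of `v`. -/
def par (w : ℕ → V) (v : V) : V := w (fIdx w v - 1)

/-- The parent edge of `v`. -/
def pe (w : ℕ → V) (v : V) : Sym2 V := s(par w v, v)

variable {w : ℕ → V} {m : ℕ}

lemma cnt_succ (w : ℕ → V) (k : ℕ) (e : Sym2 V) :
    cnt w (k + 1) e = cnt w k e + if ed w k = e then 1 else 0 := by
  unfold cnt
  rw [Finset.range_add_one, Finset.filter_insert]
  split
  · rw [Finset.card_insert_of_notMem (by simp)]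
  · simp

lemma w_fIdx (hG : GoodWalk w m) (v : V) : w (fIdx w v) = v := by
  obtain ⟨j, -, hj⟩ := hG.2.1 v
  exact Nat.sInf_mem (⟨j, hj⟩ : {j | w j = v}.Nonempty)

lemma fIdx_le {j : ℕ} {v : V} (h : w j = v) : fIdx w v ≤ j := Nat.sInf_le h

lemma fIdx_le_m (hG : GoodWalk w m) (v : V) : fIdx w v ≤ m := by
  obtain ⟨j, hjm, hj⟩ := hG.2.1 v
  exact le_trans (fIdx_le hj) hjm

lemma fIdx_pos {v : V} (hv : v ≠ w 0) (hG : GoodWalk w m) : 1 ≤ fIdx w v := by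
  rcases Nat.eq_zero_or_pos (fIdx w v) with h | h
  · exfalso; apply hv; rw [← w_fIdx hG v, h]
  · exact h

lemma fIdx_par_lt {v : V} (hv : v ≠ w 0) (hG : GoodWalk w m) :
    fIdx w (par w v) < fIdx w v := by
  have h1 : 1 ≤ fIdx w v := fIdx_pos hv hG
  have : fIdx w (par w v) ≤ fIdx w v - 1 := fIdx_le rfl
  omega

/-- Ancestors with fuel. -/
def ancN (w : ℕ → V) : ℕ → V → Finset V
  | 0, _ => ∅
  | f + 1, v => if v = w 0 then ∅ else insert v (ancN w f (par w v))

/-- The set of (weak) ancestors of `v` (excluding the root `w 0`). -/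
def anc (w : ℕ → V) (v : V) : Finset V := ancN w (fIdx w v + 1) v

lemma ancN_stable (hG : GoodWalk w m) :
    ∀ T v f f', fIdx w v ≤ T → fIdx w v < f → fIdx w v < f' →
      ancN w f v = ancN w f' v := by
  intro T
  induction T with
  | zero =>
      intro v f f' hT hf hf'
      obtain ⟨a, rfl⟩ := Nat.exists_eq_add_of_lt hf
      obtain ⟨b, rfl⟩ := Nat.exists_eq_add_of_lt hf'
      have hv0 : fIdx w v = 0 := Nat.le_zero.mp hT
      have hv : v = w 0 := by rw [← w_fIdx hG v, hv0]
      simp [hv0, ancN, hv]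
  | succ T ih =>
      intro v f f' hT hf hf'
      obtain ⟨a, rfl⟩ := Nat.exists_eq_add_of_lt hf
      obtain ⟨b, rfl⟩ := Nat.exists_eq_add_of_lt hf'
      by_cases hv : v = w 0
      · simp [ancN, hv]
      · simp only [ancN, if_neg hv]
        have hlt := fIdx_par_lt hv hG
        rw [ih (par w v) (fIdx w v + a) (fIdx w v + b) (by omega) (by omega) (by omega)]

lemma anc_root (hG : GoodWalk w m) : anc w (w 0) = ∅ := by
  unfold anc
  simp [ancN]

lemma anc_eq {v : V} (hv : v ≠ w 0) (hG : GoodWalk w m) :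
    anc w v = insert v (anc w (par w v)) := by
  unfold anc
  show ancN w (fIdx w v + 1) v = _
  rw [show ancN w (fIdx w v + 1) v = if v = w 0 then ∅ else insert v (ancN w (fIdx w v) (par w v)) from rfl,
    if_neg hv]
  congr 1
  exact ancN_stable hG (fIdx w v) (par w v) _ _ (le_of_lt (fIdx_par_lt hv hG))
    (fIdx_par_lt hv hG) (Nat.lt_succ_self _)

lemma anc_fIdx_le (hG : GoodWalk w m) :
    ∀ T v u, fIdx w v ≤ T → u ∈ anc w v → fIdx w u ≤ fIdx w v := by
  intro T
  induction T with
  | zero =>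
      intro v u hT hu
      have hv : v = w 0 := by rw [← w_fIdx hG v, Nat.le_zero.mp hT]
      rw [hv, anc_root hG] at hu
      simp at hu
  | succ T ih =>
      intro v u hT hu
      by_cases hv : v = w 0
      · rw [hv, anc_root hG] at hu; simp at hu
      · rw [anc_eq hv hG] at hu
        rcases Finset.mem_insert.mp hu with h | h
        · rw [h]
        · have hlt := fIdx_par_lt hv hG
          exact le_trans (ih (par w v) u (by omega) h) (le_of_lt hlt)

lemma anc_ne_root (hG : GoodWalk w m) :
    ∀ T v u, fIdx w v ≤ T → u ∈ anc w v → u ≠ w 0 := by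
  intro T
  induction T with
  | zero =>
      intro v u hT hu
      have hv : v = w 0 := by rw [← w_fIdx hG v, Nat.le_zero.mp hT]
      rw [hv, anc_root hG] at hu
      simp at hu
  | succ T ih =>
      intro v u hT hu
      by_cases hv : v = w 0
      · rw [hv, anc_root hG] at hu; simp at hu
      · rw [anc_eq hv hG] at hu
        rcases Finset.mem_insert.mp hu with h | h
        · rw [h]; exact hv
        · have hlt := fIdx_par_lt hv hG
          exact ih (par w v) u (by omega) h

lemma mem_anc_self {v : V} (hv : v ≠ w 0) (hG : GoodWalk w m) : v ∈ anc w v := by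
  rw [anc_eq hv hG]; exact Finset.mem_insert_self _ _



/-- The set of distinct edges. -/
def eD (w : ℕ → V) (m : ℕ) : Finset (Sym2 V) := (Finset.range m).image (ed w)

/-- New-edge steps. -/
def eNE (w : ℕ → V) (m : ℕ) : Finset ℕ :=
  (Finset.range m).filter fun j => cnt w j (ed w j) = 0

/-- New-vertex steps. -/
def eNV (w : ℕ → V) (m : ℕ) : Finset ℕ :=
  (Finset.range m).filter fun j => ∀ l ≤ j, w l ≠ w (j + 1)

lemma two_mul_card_eD (hG : GoodWalk w m) : m = 2 * (eD w m).card := by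
  have h := Finset.card_eq_sum_card_fiberwise
    (f := ed w) (s := Finset.range m) (t := eD w m)
    (fun j hj => Finset.mem_image_of_mem _ hj)
  rw [Finset.card_range] at h
  have h2 : ∀ e ∈ eD w m, (Finset.filter (fun a => ed w a = e) (Finset.range m)).card = 2 := by
    intro e he
    obtain ⟨j, hj, rfl⟩ := Finset.mem_image.mp he
    exact hG.1 j (Finset.mem_range.mp hj)
  rw [Finset.sum_congr rfl h2, Finset.sum_const, smul_eq_mul, mul_comm] at h
  exact h

lemma card_eNE (hG : GoodWalk w m) : (eNE w m).card = (eD w m).card := by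
  apply Finset.card_bij (fun j _ => ed w j)
  · intro j hj
    exact Finset.mem_image_of_mem _ (Finset.mem_of_mem_filter j hj)
  · intro j hj j' hj' hee
    by_contra hne
    rcases Nat.lt_or_ge j j' with h | h
    · have hj'2 := (Finset.mem_filter.mp hj').2
      have : j ∈ (Finset.range j').filter fun l => ed w l = ed w j' :=
        Finset.mem_filter.mpr ⟨Finset.mem_range.mpr h, hee⟩
      have : cnt w j' (ed w j') ≠ 0 := by
        unfold cnt
        exact Finset.card_ne_zero_of_mem this
      exact this hj'2
    · have h' : j' < j := by omega
      have hj2 := (Finset.mem_filter.mp hj).2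
      have : j' ∈ (Finset.range j).filter fun l => ed w l = ed w j :=
        Finset.mem_filter.mpr ⟨Finset.mem_range.mpr h', hee.symm⟩
      have : cnt w j (ed w j) ≠ 0 := by
        unfold cnt
        exact Finset.card_ne_zero_of_mem this
      exact this hj2
  · intro e he
    obtain ⟨j, hj, rfl⟩ := Finset.mem_image.mp he
    have hj := Finset.mem_range.mp hj
    set A := (Finset.range m).filter fun l => ed w l = ed w j with hA
    have hAne : A.Nonempty := ⟨j, Finset.mem_filter.mpr ⟨Finset.mem_range.mpr hj, rfl⟩⟩
    set j₀ := A.min' hAne with hj₀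
    have hj₀A : j₀ ∈ A := A.min'_mem hAne
    have hj₀m : j₀ < m := Finset.mem_range.mp (Finset.mem_of_mem_filter _ hj₀A)
    have hj₀e : ed w j₀ = ed w j := (Finset.mem_filter.mp hj₀A).2
    refine ⟨j₀, Finset.mem_filter.mpr ⟨Finset.mem_range.mpr hj₀m, ?_⟩, hj₀e⟩
    unfold cnt
    rw [Finset.card_eq_zero]
    rw [Finset.eq_empty_iff_forall_notMem]
    intro l hl
    obtain ⟨hl1, hl2⟩ := Finset.mem_filter.mp hl
    have hl1 := Finset.mem_range.mp hl1
    have : l ∈ A := Finset.mem_filter.mpr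
      ⟨Finset.mem_range.mpr (lt_trans hl1 hj₀m), by rw [hl2, hj₀e]⟩
    have := A.min'_le l this
    omega

lemma card_eNV (hG : GoodWalk w m) : (eNV w m).card = Fintype.card V - 1 := by
  have : (eNV w m).card = (Finset.univ.erase (w 0)).card := by
    apply Finset.card_bij (fun j _ => w (j + 1))
    · intro j hj
      refine Finset.mem_erase.mpr ⟨?_, Finset.mem_univ _⟩
      have := (Finset.mem_filter.mp hj).2 0 (Nat.zero_le j)
      exact fun h => this h.symm
    · intro j hj j' hj' hee
      by_contra hne
      rcases Nat.lt_or_ge j j' with h | h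
      · exact (Finset.mem_filter.mp hj').2 (j + 1) (by omega) hee
      · exact (Finset.mem_filter.mp hj).2 (j' + 1) (by omega) hee.symm
    · intro v hv
      have hv0 : v ≠ w 0 := (Finset.mem_erase.mp hv).1
      have h1 : 1 ≤ fIdx w v := fIdx_pos hv0 hG
      have hm : fIdx w v ≤ m := fIdx_le_m hG v
      refine ⟨fIdx w v - 1, Finset.mem_filter.mpr ⟨Finset.mem_range.mpr (by omega), ?_⟩, ?_⟩
      · intro l hl hlv
        have hlv' : w l = v := by
          rw [hlv, show fIdx w v - 1 + 1 = fIdx w v by omega, w_fIdx hG v]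
        have := fIdx_le hlv'
        omega
      · rw [show fIdx w v - 1 + 1 = fIdx w v by omega]
        exact w_fIdx hG v
  rw [this, Finset.card_erase_of_mem (Finset.mem_univ _), Finset.card_univ]

lemma eNV_subset_eNE : eNV w m ⊆ eNE w m := by
  intro j hj
  obtain ⟨hj1, hj2⟩ := Finset.mem_filter.mp hj
  refine Finset.mem_filter.mpr ⟨hj1, ?_⟩
  unfold cnt
  rw [Finset.card_eq_zero, Finset.eq_empty_iff_forall_notMem]
  intro l hl
  obtain ⟨hl1, hl2⟩ := Finset.mem_filter.mp hl
  have hl1 := Finset.mem_range.mp hl1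
  unfold ed at hl2
  rcases Sym2.eq_iff.mp hl2 with ⟨h1, h2⟩ | ⟨h1, h2⟩
  · exact hj2 (l + 1) (by omega) h2
  · exact hj2 l (by omega) h1

lemma eNE_eq_eNV (hG : GoodWalk w m) : eNE w m = eNV w m := by
  symm
  apply Finset.eq_of_subset_of_card_le eNV_subset_eNE
  rw [card_eNE hG, card_eNV hG]
  have h2 := two_mul_card_eD hG
  have h3 := hG.2.2
  omega

lemma newEdge_newVtx (hG : GoodWalk w m) {j : ℕ} (hj : j < m)
    (h : cnt w j (ed w j) = 0) : ∀ l ≤ j, w l ≠ w (j + 1) := by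
  have : j ∈ eNE w m := Finset.mem_filter.mpr ⟨Finset.mem_range.mpr hj, h⟩
  rw [eNE_eq_eNV hG] at this
  exact (Finset.mem_filter.mp this).2

lemma step_parent (hG : GoodWalk w m) {k : ℕ} (hk : k < m) :
    (w (k + 1) ≠ w 0 ∧ par w (w (k + 1)) = w k ∧ pe w (w (k + 1)) = ed w k) ∨
    (w k ≠ w 0 ∧ par w (w k) = w (k + 1) ∧ pe w (w k) = ed w k) := by
  set A := (Finset.range m).filter fun l => ed w l = ed w k with hA
  have hAne : A.Nonempty := ⟨k, Finset.mem_filter.mpr ⟨Finset.mem_range.mpr hk, rfl⟩⟩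
  set j₀ := A.min' hAne with hj₀
  have hj₀A : j₀ ∈ A := A.min'_mem hAne
  have hj₀m : j₀ < m := Finset.mem_range.mp (Finset.mem_of_mem_filter _ hj₀A)
  have hj₀e : ed w j₀ = ed w k := (Finset.mem_filter.mp hj₀A).2
  have hcnt0 : cnt w j₀ (ed w j₀) = 0 := by
    unfold cnt
    rw [Finset.card_eq_zero, Finset.eq_empty_iff_forall_notMem]
    intro l hl
    obtain ⟨hl1, hl2⟩ := Finset.mem_filter.mp hl
    have hl1 := Finset.mem_range.mp hl1
    have : l ∈ A := Finset.mem_filter.mpr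
      ⟨Finset.mem_range.mpr (lt_trans hl1 hj₀m), by rw [hl2, hj₀e]⟩
    have := A.min'_le l this
    omega
  have hnew := newEdge_newVtx hG hj₀m hcnt0
  have hu0 : w (j₀ + 1) ≠ w 0 := fun h => hnew 0 (Nat.zero_le _) h.symm
  have hfu : fIdx w (w (j₀ + 1)) = j₀ + 1 := by
    have h1 : fIdx w (w (j₀ + 1)) ≤ j₀ + 1 := fIdx_le rfl
    rcases Nat.lt_or_ge (fIdx w (w (j₀ + 1))) (j₀ + 1) with h | h
    · exfalso
      exact hnew _ (by omega) (w_fIdx hG (w (j₀ + 1)))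
    · omega
  have hpar : par w (w (j₀ + 1)) = w j₀ := by
    unfold par
    rw [hfu]
    simp
  have hpe : pe w (w (j₀ + 1)) = ed w j₀ := by
    unfold pe ed
    rw [hpar]
  have hj₀e' := hj₀e
  unfold ed at hj₀e
  rcases Sym2.eq_iff.mp hj₀e with ⟨h1, h2⟩ | ⟨h1, h2⟩
  · left
    refine ⟨by rw [← h2]; exact hu0, by rw [← h2, hpar, h1],
      by rw [← h2, hpe]; exact hj₀e'⟩
  · right
    refine ⟨by rw [← h2]; exact hu0, by rw [← h2, hpar, h1],
      by rw [← h2, hpe]; exact hj₀e'⟩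


/-- Edges with odd count among the first `k` steps. -/
def oddE (w : ℕ → V) (k : ℕ) : Finset (Sym2 V) :=
  Finset.univ.filter fun f => Odd (cnt w k f)

lemma pe_inj_aux (hG : GoodWalk w m) {u x : V} (hu : u ≠ w 0) (hx : x ≠ w 0)
    (h : pe w u = pe w x) : u = x := by
  unfold pe at h
  rcases Sym2.eq_iff.mp h with ⟨h1, h2⟩ | ⟨h1, h2⟩
  · exact h2
  · exfalso
    have l1 := fIdx_par_lt hu hG
    have l2 := fIdx_par_lt hx hG
    rw [h1] at l1
    rw [← h2] at l2
    omega

lemma oddE_eq_anc (hG : GoodWalk w m) : ∀ k ≤ m, oddE w k = (anc w (w k)).image (pe w) := by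
  intro k
  induction k with
  | zero =>
      intro _
      rw [anc_root hG]
      ext f
      simp [oddE, cnt]
  | succ k ih =>
      intro hk1
      have hk : k < m := hk1
      have IH := ih (le_of_lt hk)
      rcases step_parent hG hk with ⟨hx0, hpx, hpe⟩ | ⟨hy0, hpy, hpe⟩
      · -- down step: `w (k+1)` is a child of `w k`
        have hanc : anc w (w (k + 1)) = insert (w (k + 1)) (anc w (w k)) := by
          rw [anc_eq hx0 hG, hpx]
        have hnotmem : w (k + 1) ∉ anc w (w k) := by
          intro hmem
          have h1 := anc_fIdx_le hG (fIdx w (w k)) (w k) (w (k + 1)) le_rfl hmem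
          have h2 := fIdx_par_lt hx0 hG
          rw [hpx] at h2
          omega
        have hedge_notin : ed w k ∉ oddE w k := by
          rw [IH]
          intro hmem
          obtain ⟨u, hu, hpeu⟩ := Finset.mem_image.mp hmem
          have hu0 := anc_ne_root hG (fIdx w (w k)) (w k) u le_rfl hu
          have := pe_inj_aux hG hu0 hx0 (by rw [hpeu, hpe])
          rw [this] at hu
          exact hnotmem hu
        rw [hanc, Finset.image_insert, hpe, ← IH]
        ext f
        simp only [Finset.mem_insert, oddE, Finset.mem_filter, Finset.mem_univ, true_and]
        rw [cnt_succ]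
        by_cases hf : ed w k = f
        · rw [if_pos hf, Nat.odd_add_one]
          have hno : ¬ Odd (cnt w k f) := by
            rw [← hf]
            simpa [oddE] using hedge_notin
          constructor
          · intro _; exact Or.inl hf.symm
          · intro _; exact hno
        · rw [if_neg hf, Nat.add_zero]
          constructor
          · intro h; exact Or.inr h
          · rintro (h | h)
            · exact absurd h.symm hf
            · exact h
      · -- up step: `w k` is a child of `w (k+1)`
        have hanc : anc w (w k) = insert (w k) (anc w (w (k + 1))) := by
          rw [anc_eq hy0 hG, hpy]
        have hnotmem : w k ∉ anc w (w (k + 1)) := by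
          intro hmem
          have h1 := anc_fIdx_le hG (fIdx w (w (k + 1))) (w (k + 1)) (w k) le_rfl hmem
          have h2 := fIdx_par_lt hy0 hG
          rw [hpy] at h2
          omega
        have hmemOdd : Odd (cnt w k (ed w k)) := by
          have : ed w k ∈ oddE w k := by
            rw [IH, hanc, Finset.image_insert, ← hpe]
            exact Finset.mem_insert_self _ _
          simpa [oddE] using this
        have hnotin' : ed w k ∉ (anc w (w (k + 1))).image (pe w) := by
          intro hmem
          obtain ⟨u, hu, hpeu⟩ := Finset.mem_image.mp hmem
          have hu0 := anc_ne_root hG (fIdx w (w (k + 1))) (w (k + 1)) u le_rfl hu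
          have := pe_inj_aux hG hu0 hy0 (by rw [hpeu, hpe])
          rw [this] at hu
          exact hnotmem hu
        ext f
        simp only [oddE, Finset.mem_filter, Finset.mem_univ, true_and]
        rw [cnt_succ]
        by_cases hf : ed w k = f
        · rw [if_pos hf, Nat.odd_add_one]
          constructor
          · intro h
            exfalso
            apply h
            rw [← hf]
            exact hmemOdd
          · intro h
            exfalso
            apply hnotin'
            rw [hf]
            exact h
        · rw [if_neg hf, Nat.add_zero]
          have h2 : (Odd (cnt w k f)) ↔ f ∈ (anc w (w k)).image (pe w) := by
            rw [← IH]; simp [oddE]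
          rw [h2, hanc, Finset.image_insert, Finset.mem_insert]
          constructor
          · rintro (h | h)
            · exfalso; apply hf; rw [h, hpe]
            · exact h
          · intro h; right; exact h

lemma uniq_open (hG : GoodWalk w m) {k : ℕ} (hk : k ≤ m) {z z' : V}
    (hz : Odd (cnt w k s(w k, z))) (hz' : Odd (cnt w k s(w k, z'))) : z = z' := by
  have hO := oddE_eq_anc hG k hk
  have key : ∀ y, Odd (cnt w k s(w k, y)) → y = par w (w k) := by
    intro y hy
    have hmem : s(w k, y) ∈ oddE w k := by simp [oddE, hy]
    rw [hO] at hmem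
    obtain ⟨u, hu, hpeu⟩ := Finset.mem_image.mp hmem
    have hu0 := anc_ne_root hG (fIdx w (w k)) (w k) u le_rfl hu
    have hule := anc_fIdx_le hG (fIdx w (w k)) (w k) u le_rfl hu
    unfold pe at hpeu
    rcases Sym2.eq_iff.mp hpeu with ⟨h1, h2⟩ | ⟨h1, h2⟩
    · exfalso
      have := fIdx_par_lt hu0 hG
      rw [h1] at this
      omega
    · rw [← h2, h1]
  rw [key z hz, key z' hz']

lemma cnt_one_of_old (hG : GoodWalk w m) {k : ℕ} (hk : k < m)
    (hold : ∃ l ≤ k, w l = w (k + 1)) : cnt w k (ed w k) = 1 := by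
  have h2 : cnt w m (ed w k) = 2 := hG.1 k hk
  have hsub : insert k ((Finset.range k).filter fun j => ed w j = ed w k)
      ⊆ (Finset.range m).filter fun j => ed w j = ed w k := by
    intro j hj
    rcases Finset.mem_insert.mp hj with rfl | hj
    · exact Finset.mem_filter.mpr ⟨Finset.mem_range.mpr hk, rfl⟩
    · obtain ⟨ha, hbb⟩ := Finset.mem_filter.mp hj
      exact Finset.mem_filter.mpr
        ⟨Finset.mem_range.mpr (lt_trans (Finset.mem_range.mp ha) hk), hbb⟩
  have hcard := Finset.card_le_card hsub
  rw [Finset.card_insert_of_notMem (by simp)] at hcard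
  unfold cnt at h2 ⊢
  rcases Nat.lt_or_ge (((Finset.range k).filter fun j => ed w j = ed w k).card) 1 with h | h
  · exfalso
    obtain ⟨l, hl, hlv⟩ := hold
    exact newEdge_newVtx hG hk (by unfold cnt; omega) l hl hlv
  · omega

/-- The list of the first `k+1` vertices of the walk. -/
def PL (w : ℕ → V) (k : ℕ) : List V := (List.range (k + 1)).map w

lemma PL_succ (w : ℕ → V) (k : ℕ) : PL w (k + 1) = PL w k ++ [w (k + 1)] := by
  unfold PL
  rw [List.range_succ, List.map_append, List.map_singleton]

lemma mem_PL {w : ℕ → V} {k : ℕ} {x : V} : x ∈ PL w k ↔ ∃ l ≤ k, w l = x := by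
  unfold PL
  simp only [List.mem_map, List.mem_range]
  constructor
  · rintro ⟨l, hl, rfl⟩; exact ⟨l, by omega, rfl⟩
  · rintro ⟨l, hl, rfl⟩; exact ⟨l, by omega, rfl⟩

lemma ddp_PL_prefix (w : ℕ → V) {j k : ℕ} (h : j ≤ k) : ddp (PL w j) <+: ddp (PL w k) := by
  induction k with
  | zero =>
      have : j = 0 := Nat.le_zero.mp h
      subst this; exact List.prefix_refl _
  | succ k ih =>
      rcases Nat.lt_or_ge j (k + 1) with h' | h'
      · refine List.IsPrefix.trans (ih (by omega)) ?_
        rw [PL_succ]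
        exact ddp_prefix_concat _ _
      · have : j = k + 1 := by omega
        subst this; exact List.prefix_refl _

lemma ddp_PL_zero (w : ℕ → V) : ddp (PL w 0) = [w 0] := by
  simp [PL, ddp, ddpStep, List.range_succ]

lemma reconstruction {w w' : ℕ → V} (hG : GoodWalk w m) (hG' : GoodWalk w' m)
    (hb : ∀ k < m, (∃ l ≤ k, w l = w (k + 1)) ↔ (∃ l ≤ k, w' l = w' (k + 1)))
    (hg : ddp (PL w m) = ddp (PL w' m)) :
    ∀ k ≤ m, w k = w' k := by
  have base : w 0 = w' 0 := by
    obtain ⟨t, ht⟩ := ddp_PL_prefix w (Nat.zero_le m)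
    obtain ⟨t', ht'⟩ := ddp_PL_prefix w' (Nat.zero_le m)
    rw [ddp_PL_zero] at ht ht'
    rw [← hg, ← ht] at ht'
    simp only [List.singleton_append, List.cons.injEq] at ht'
    exact ht'.1.symm
  suffices h : ∀ k, k ≤ m → ∀ j ≤ k, w j = w' j by
    intro k hk
    exact h k hk k le_rfl
  intro k
  induction k with
  | zero =>
      intro _ j hj
      have : j = 0 := Nat.le_zero.mp hj
      subst this
      exact base
  | succ k ih =>
      intro hk1 j hj
      have hk : k < m := hk1
      have IH : ∀ j ≤ k, w j = w' j := ih (le_of_lt hk)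
      rcases Nat.lt_or_ge j (k + 1) with h' | h'
      · exact IH j (by omega)
      · have : j = k + 1 := by omega
        subst this
        have hPLk : PL w k = PL w' k := by
          unfold PL
          apply List.map_congr_left
          intro a ha
          exact IH a (by have := List.mem_range.mp ha; omega)
        by_cases hold : ∃ l ≤ k, w l = w (k + 1)
        · have hold' : ∃ l ≤ k, w' l = w' (k + 1) := (hb k hk).mp hold
          have c1 : cnt w k (ed w k) = 1 := cnt_one_of_old hG hk hold
          have c1' : cnt w' k (ed w' k) = 1 := cnt_one_of_old hG' hk hold'
          have hcnt_eq : ∀ f, cnt w' k f = cnt w k f := by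
            intro f
            unfold cnt
            congr 1
            apply Finset.filter_congr
            intro a ha
            have ha := Finset.mem_range.mp ha
            unfold ed
            rw [IH a (by omega), IH (a + 1) (by omega)]
          have hz : Odd (cnt w k s(w k, w (k + 1))) := by
            have he : ed w k = s(w k, w (k + 1)) := rfl
            rw [← he, c1]
            exact odd_one
          have hz' : Odd (cnt w k s(w k, w' (k + 1))) := by
            have he : ed w' k = s(w k, w' (k + 1)) := by
              unfold ed
              rw [IH k le_rfl]
            rw [← he, ← hcnt_eq, c1']
            exact odd_one
          exact uniq_open hG (le_of_lt hk) hz hz'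
        · have hnew' : ¬ ∃ l ≤ k, w' l = w' (k + 1) := fun h => hold ((hb k hk).mpr h)
          have hmem : w (k + 1) ∉ PL w k := by rw [mem_PL]; exact hold
          have hmem' : w' (k + 1) ∉ PL w' k := by rw [mem_PL]; exact hnew'
          have hstep : ddp (PL w (k + 1)) = ddp (PL w k) ++ [w (k + 1)] := by
            rw [PL_succ, ddp_concat_of_not_mem hmem]
          have hstep' : ddp (PL w' (k + 1)) = ddp (PL w' k) ++ [w' (k + 1)] := by
            rw [PL_succ, ddp_concat_of_not_mem hmem']
          obtain ⟨t, ht⟩ := ddp_PL_prefix w (show k + 1 ≤ m from hk1)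
          obtain ⟨t', ht'⟩ := ddp_PL_prefix w' (show k + 1 ≤ m from hk1)
          rw [hstep] at ht
          rw [hstep', ← hPLk, ← hg, ← ht] at ht'
          rw [List.append_assoc, List.append_assoc] at ht'
          have hcc := List.append_cancel_left ht'
          simp only [List.singleton_append, List.cons.injEq] at hcc
          exact hcc.1.symm

end Walk
end PCAux

section FinLayer

open PCAux

/-- Extend a path on `Fin (m+1)` to an `ℕ`-indexed walk. -/
def wOf {m N : ℕ} (i : Fin (m + 1) → Fin (N + 1)) : ℕ → Fin (N + 1) :=
  fun j => i ⟨min j m, by omega⟩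

lemma wOf_eq {m N : ℕ} (i : Fin (m + 1) → Fin (N + 1)) {j : ℕ} (hj : j ≤ m) :
    wOf i j = i ⟨j, by omega⟩ := by
  unfold wOf
  congr 1
  exact Fin.ext (by simp [Nat.min_eq_left hj])

lemma ed_wOf {n N : ℕ} (i : Fin (2 * n + 1) → Fin (N + 1)) {j : ℕ} (hj : j < 2 * n) :
    ed (wOf i) j = pathEdge i ⟨j, hj⟩ := by
  unfold ed pathEdge
  rw [wOf_eq i (by omega : j ≤ 2 * n), wOf_eq i (by omega : j + 1 ≤ 2 * n)]
  rfl

lemma cnt_eq_edgeCount {n N : ℕ} (i : Fin (2 * n + 1) → Fin (N + 1)) (k : Fin (2 * n)) :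
    cnt (wOf i) (2 * n) (pathEdge i k) = edgeCount i k := by
  unfold cnt edgeCount
  apply Finset.card_bij (fun (l : ℕ) (hl : l ∈ (Finset.range (2 * n)).filter
      fun j => ed (wOf i) j = pathEdge i k) =>
    (⟨l, Finset.mem_range.mp (Finset.mem_of_mem_filter l hl)⟩ : Fin (2 * n)))
  · intro l hl
    obtain ⟨hl1, hl2⟩ := Finset.mem_filter.mp hl
    have hl1 : l < 2 * n := Finset.mem_range.mp hl1
    refine Finset.mem_filter.mpr ⟨Finset.mem_univ _, ?_⟩
    rw [← ed_wOf i hl1]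
    exact hl2
  · intro l hl l' hl' h
    have := congrArg Fin.val h
    simpa using this
  · intro l hl
    have hl2 := (Finset.mem_filter.mp hl).2
    refine ⟨(l : ℕ), Finset.mem_filter.mpr ⟨Finset.mem_range.mpr l.isLt, ?_⟩, ?_⟩
    · rw [ed_wOf i l.isLt]
      rw [show (⟨(l : ℕ), l.isLt⟩ : Fin (2 * n)) = l from Fin.ext rfl]
      exact hl2
    · exact Fin.ext rfl

lemma goodWalk_of {n : ℕ} (i : Fin (2 * n + 1) → Fin (n + 1))
    (hsp : StrictlyPaired i) (hc : colors i = n + 1) : GoodWalk (wOf i) (2 * n) := by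
  refine ⟨?_, ?_, by rw [Fintype.card_fin]; ring⟩
  · intro j hj
    rw [ed_wOf i hj, cnt_eq_edgeCount i ⟨j, hj⟩]
    exact hsp _
  · intro v
    have himg : Finset.univ.image i = Finset.univ := by
      apply Finset.eq_univ_of_card
      rw [Fintype.card_fin]
      exact hc
    have : v ∈ Finset.univ.image i := by rw [himg]; exact Finset.mem_univ v
    obtain ⟨l, -, hl⟩ := Finset.mem_image.mp this
    refine ⟨(l : ℕ), by omega, ?_⟩
    rw [wOf_eq i (by omega : (l : ℕ) ≤ 2 * n)]
    rw [show (⟨(l : ℕ), by omega⟩ : Fin (2 * n + 1)) = l from Fin.ext rfl]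
    exact hl

/-- The new/old boolean data of a path. -/
def bOf {n : ℕ} (i : Fin (2 * n + 1) → Fin (n + 1)) : Fin (2 * n) → Bool :=
  fun k => decide (∃ l ≤ (k : ℕ), wOf i l = wOf i ((k : ℕ) + 1))

/-- The first-appearance-order data of a path. -/
def gOf {n : ℕ} (i : Fin (2 * n + 1) → Fin (n + 1)) : Fin (n + 1) ↪ Fin (n + 1) :=
  if h : (ddp (PL (wOf i) (2 * n))).length = n + 1 ∧ (ddp (PL (wOf i) (2 * n))).Nodup then
    ⟨fun j => (ddp (PL (wOf i) (2 * n))).get (Fin.cast h.1.symm j),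
      fun a b hab => by
        have := (List.nodup_iff_injective_get.mp h.2) hab
        exact Fin.cast_injective _ this⟩
  else Function.Embedding.refl _

lemma toFinset_PL {n : ℕ} (i : Fin (2 * n + 1) → Fin (n + 1)) :
    (PL (wOf i) (2 * n)).toFinset = Finset.univ.image i := by
  ext v
  rw [List.mem_toFinset, mem_PL]
  constructor
  · rintro ⟨l, hl, rfl⟩
    rw [wOf_eq i hl]
    exact Finset.mem_image_of_mem i (Finset.mem_univ _)
  · intro hv
    obtain ⟨l, -, hl⟩ := Finset.mem_image.mp hv
    refine ⟨(l : ℕ), by omega, ?_⟩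
    rw [wOf_eq i (by omega : (l : ℕ) ≤ 2 * n)]
    rw [show (⟨(l : ℕ), by omega⟩ : Fin (2 * n + 1)) = l from Fin.ext rfl]
    exact hl

lemma gOf_cond {n : ℕ} (i : Fin (2 * n + 1) → Fin (n + 1)) (hc : colors i = n + 1) :
    (ddp (PL (wOf i) (2 * n))).length = n + 1 ∧ (ddp (PL (wOf i) (2 * n))).Nodup := by
  constructor
  · rw [length_ddp, toFinset_PL]
    exact hc
  · exact ddp_nodup _

lemma path_inj {n : ℕ} (i i' : Fin (2 * n + 1) → Fin (n + 1))
    (hsp : StrictlyPaired i) (hc : colors i = n + 1)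
    (hsp' : StrictlyPaired i') (hc' : colors i' = n + 1)
    (hbeq : bOf i = bOf i') (hgeq : gOf i = gOf i') : i = i' := by
  have hG := goodWalk_of i hsp hc
  have hG' := goodWalk_of i' hsp' hc'
  have h := gOf_cond i hc
  have h' := gOf_cond i' hc'
  -- extract list equality
  have hlists : ddp (PL (wOf i) (2 * n)) = ddp (PL (wOf i') (2 * n)) := by
    unfold gOf at hgeq
    rw [dif_pos h, dif_pos h'] at hgeq
    have hfun := congrArg (fun e : Fin (n + 1) ↪ Fin (n + 1) => (e : Fin (n + 1) → Fin (n + 1)))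
      hgeq
    apply List.ext_get (by rw [h.1, h'.1])
    intro idx h1 h2
    have hidx : idx < n + 1 := by rw [h.1] at h1; exact h1
    have := congrFun hfun ⟨idx, hidx⟩
    simpa using this
  have hbb : ∀ k < 2 * n,
      (∃ l ≤ k, wOf i l = wOf i (k + 1)) ↔ (∃ l ≤ k, wOf i' l = wOf i' (k + 1)) := by
    intro k hk
    have hb1 : decide (∃ l ≤ k, wOf i l = wOf i (k + 1))
        = decide (∃ l ≤ k, wOf i' l = wOf i' (k + 1)) := congrFun hbeq ⟨k, hk⟩
    exact decide_eq_decide.mp hb1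
  have hrec := reconstruction hG hG' hbb hlists
  funext l
  have h1 : i l = wOf i (l : ℕ) := by
    rw [wOf_eq i (by omega : (l : ℕ) ≤ 2 * n)]
  have h2 : i' l = wOf i' (l : ℕ) := by
    rw [wOf_eq i' (by omega : (l : ℕ) ≤ 2 * n)]
  rw [h1, h2, hrec (l : ℕ) (by omega)]

lemma card_good_le (n : ℕ) :
    (Finset.univ.filter fun i : Fin (2 * n + 1) → Fin (n + 1) =>
      StrictlyPaired i ∧ colors i = n + 1).card ≤ 2 ^ (2 * n) * (n + 1).factorial := by
  have hcard := Finset.card_le_card_of_injOn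
    (s := Finset.univ.filter fun i : Fin (2 * n + 1) → Fin (n + 1) =>
      StrictlyPaired i ∧ colors i = n + 1)
    (t := (Finset.univ : Finset ((Fin (2 * n) → Bool) × (Fin (n + 1) ↪ Fin (n + 1)))))
    (fun i => (bOf i, gOf i))
    (fun a _ => Finset.mem_univ ((bOf a, gOf a)))
    (fun a ha b hb hab => by
      obtain ⟨hspa, hca⟩ := (Finset.mem_filter.mp (Finset.mem_coe.mp ha)).2
      obtain ⟨hspb, hcb⟩ := (Finset.mem_filter.mp (Finset.mem_coe.mp hb)).2
      exact path_inj a b hspa hca hspb hcb (congrArg Prod.fst hab) (congrArg Prod.snd hab))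
  refine le_trans hcard ?_
  rw [Finset.card_univ, Fintype.card_prod, Fintype.card_fun, Fintype.card_embedding_eq,
    Fintype.card_fin, Nat.descFactorial_self, Fintype.card_bool, Fintype.card_fin]

lemma pathCount_le (S : Set (ℝ × ℝ)) {n : ℕ} (C : Fin (2 * n) → Bool)
    (x : Fin (n + 1) → ℝ) : (pathCount S C x : ℝ) ≤ (2 ^ (2 * n) * (n + 1).factorial : ℕ) := by
  have : pathCount S C x ≤ 2 ^ (2 * n) * (n + 1).factorial := by
    unfold pathCount
    split
    · refine le_trans (Finset.card_le_card ?_) (card_good_le n)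
      intro i hi
      have h := (Finset.mem_filter.mp hi).2
      exact Finset.mem_filter.mpr ⟨Finset.mem_univ _, h.2.1.1, h.2.2.1⟩
    · exact Nat.zero_le _
  exact_mod_cast this

end FinLayer

/-- There is a universal constant `K` such that for every pattern `S`, every
`n ≥ 1` and every configuration `C` of length `2n`, the normalized integral of
the path counting function, i.e. the asymptotic starred moment
`(1/(n+1)!) ∫_{[0,1]^{n+1}} f_{S,C}^{n+1}`, is at most `K^n`; in particular the
asymptotic starred moments grow at most exponentially in `n` (and hence satisfy
Carleman's condition). -/
theorem pathCount_integral_exponential_bound :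
    ∃ K : ℝ, ∀ S : Set (ℝ × ℝ), IsPattern S → ∀ n : ℕ, 1 ≤ n →
      ∀ C : Fin (2 * n) → Bool,
        (1 / (Nat.factorial (n + 1) : ℝ)) *
          (∫ x in Set.univ.pi fun _ : Fin (n + 1) => Set.Icc (0 : ℝ) 1,
            (pathCount S C x : ℝ)) ≤ K ^ n := by
  refine ⟨4, ?_⟩
  intro S hS n hn C
  set box : Set (Fin (n + 1) → ℝ) := Set.univ.pi fun _ : Fin (n + 1) => Set.Icc (0 : ℝ) 1
    with hbox
  have hvol : MeasureTheory.volume box = 1 := by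
    rw [hbox, MeasureTheory.volume_pi_pi]
    simp [Real.volume_Icc]
  set B : ℝ := ((2 ^ (2 * n) * (n + 1).factorial : ℕ) : ℝ) with hB
  have hint : (∫ x in box, (pathCount S C x : ℝ)) ≤ ∫ _ in box, B := by
    apply MeasureTheory.integral_mono_of_nonneg
    · exact MeasureTheory.ae_of_all _ fun x => by positivity
    · refine MeasureTheory.integrable_const_iff.mpr (Or.inr ?_)
      refine ⟨?_⟩
      rw [MeasureTheory.Measure.restrict_apply_univ, hvol]
      exact ENNReal.one_lt_top
    · exact MeasureTheory.ae_of_all _ fun x => pathCount_le S C x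
  have hconst : (∫ _ in box, B) = B := by
    rw [MeasureTheory.setIntegral_const, MeasureTheory.measureReal_def, hvol]
    simp
  rw [hconst] at hint
  have hmul : (1 / (Nat.factorial (n + 1) : ℝ)) * (∫ x in box, (pathCount S C x : ℝ))
      ≤ (1 / (Nat.factorial (n + 1) : ℝ)) * B := by
    apply mul_le_mul_of_nonneg_left hint
    positivity
  refine le_trans hmul (le_of_eq ?_)
  rw [hB]
  push_cast
  rw [show ((2 : ℝ) ^ (2 * n)) = 4 ^ n from by rw [pow_mul]; norm_num]
  have hf : ((n + 1).factorial : ℝ) ≠ 0 := by positivity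
  field_simp
end
end
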